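/- Let W₀ be the space of ordinals less than or equal to the first uncountable ordinal Ω, with the order topology, and let W = W₀ \ {Ω} with the subspace topology. Then the space C(W, W₀) equipped with the graph topology τ_Γ is not a regular topological space. -/

import Mathlib

open TopologicalSpace Set Ordinal

/-- The graph of a continuous map, as a subset of `X × Y`. -/
def graphSet {X Y : Type*} [TopologicalSpace X] [TopologicalSpace Y] (f : C(X, Y)) :
    Set (X × Y) := {p | p.2 = f p.1}

/-- The graph topology `τ_Γ` on `C(X, Y)`, generated by the sets
`F_G = {f | graph f ⊆ G}` for `G` open in `X × Y`. -/
def graphTopology (X Y : Type*) [TopologicalSpace X] [TopologicalSpace Y] :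
    TopologicalSpace C(X, Y) :=
  generateFrom {S | ∃ G : Set (X × Y), IsOpen G ∧ S = {f : C(X, Y) | graphSet f ⊆ G}}

/-- `W₀`: the ordinals less than or equal to the first uncountable ordinal `ω₁`,
with the (order) topology inherited from the order topology on `Ordinal`. -/
noncomputable abbrev W₀ : Type _ := ↥(Set.Iic (ω_ 1))

/-- `W = W₀ \ {Ω}`, with the subspace topology inherited from `W₀`. -/
noncomputable abbrev W : Type _ := {x : W₀ // x ≠ ⟨ω_ 1, Set.mem_Iic.mpr le_rfl⟩}

section Aux

universe u v

/-- The top point of `W₀`. -/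
noncomputable def wtop : W₀.{u} := ⟨ω_ 1, Set.mem_Iic.mpr le_rfl⟩

lemma W.lt_omega1 (x : W.{u}) : x.1.1 < ω_ 1 :=
  lt_of_le_of_ne (Set.mem_Iic.mp x.1.2) (fun h => x.2 (Subtype.ext h))

/-- Constructor for elements of `W`. -/
noncomputable def mkW (o : Ordinal.{u}) (h : o < ω_ 1) : W.{u} :=
  ⟨⟨o, Set.mem_Iic.mpr h.le⟩, fun hc => absurd (congrArg Subtype.val hc) h.ne⟩

/-- Constructor for elements of `W₀`. -/
noncomputable def mkW₀ (o : Ordinal.{u}) (h : o ≤ ω_ 1) : W₀.{u} := ⟨o, Set.mem_Iic.mpr h⟩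

/-- Basic open sets are open in the graph topology. -/
lemma isOpen_FG {X Y : Type*} [TopologicalSpace X] [TopologicalSpace Y] {G : Set (X × Y)}
    (hG : IsOpen G) : @IsOpen _ (graphTopology X Y) {f : C(X, Y) | graphSet f ⊆ G} :=
  TopologicalSpace.GenerateOpen.basic _ ⟨G, hG, rfl⟩

/-- The sets `F_G` form a basis of the graph topology. -/
lemma exists_basic {X Y : Type*} [TopologicalSpace X] [TopologicalSpace Y] {O : Set C(X, Y)}
    (hO : @IsOpen _ (graphTopology X Y) O) :
    ∀ g ∈ O, ∃ G : Set (X × Y), IsOpen G ∧ graphSet g ⊆ G ∧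
      {f : C(X, Y) | graphSet f ⊆ G} ⊆ O := by
  have hO' : TopologicalSpace.GenerateOpen
      {S | ∃ G : Set (X × Y), IsOpen G ∧ S = {f : C(X, Y) | graphSet f ⊆ G}} O := hO
  clear hO
  induction hO' with
  | basic s hs =>
    obtain ⟨G, hG, rfl⟩ := hs
    exact fun g hg => ⟨G, hG, hg, subset_rfl⟩
  | univ => exact fun g _ => ⟨univ, isOpen_univ, subset_univ _, subset_univ _⟩
  | inter s t _ _ ihs iht =>
    intro g hg
    obtain ⟨G1, h1, hg1, hs1⟩ := ihs g hg.1
    obtain ⟨G2, h2, hg2, hs2⟩ := iht g hg.2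
    exact ⟨G1 ∩ G2, h1.inter h2, subset_inter hg1 hg2,
      fun f hf => ⟨hs1 (fun p hp => (hf hp).1), hs2 (fun p hp => (hf hp).2)⟩⟩
  | sUnion S _ ih =>
    rintro g ⟨s, hsS, hgs⟩
    obtain ⟨G, hG, hgG, hsub⟩ := ih s hsS g hgs
    exact ⟨G, hG, hgG, hsub.trans (subset_sUnion_of_mem hsS)⟩

/-- From an open set of `W` containing a limit point, extract a left interval. -/
lemma exists_left_int {u : Set W.{u}} (hu : IsOpen u) {lam : Ordinal} (hlam : lam < ω_ 1)
    (hlim : Order.IsSuccLimit lam) (hmem : mkW lam hlam ∈ u) :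
    ∃ a < lam, ∀ x : W.{u}, a < x.1.1 → x.1.1 ≤ lam → x ∈ u := by
  obtain ⟨u1, hu1, rfl⟩ := isOpen_induced_iff.mp hu
  obtain ⟨U, hU, rfl⟩ := isOpen_induced_iff.mp hu1
  obtain ⟨a, ha, hIoo⟩ := (Ordinal.isOpen_iff.mp hU) lam hmem hlim
  refine ⟨a, ha, fun x hax hxlam => ?_⟩
  rcases lt_or_eq_of_le hxlam with h | h
  · exact hIoo ⟨hax, h⟩
  · show x.1.1 ∈ U
    rw [h]; exact hmem

/-- From an open set of `W₀` containing a limit point, extract a left interval. -/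
lemma exists_left_int₀ {v : Set W₀.{u}} (hv : IsOpen v) {lam : Ordinal} (hlam : lam ≤ ω_ 1)
    (hlim : Order.IsSuccLimit lam) (hmem : mkW₀ lam hlam ∈ v) :
    ∃ a < lam, ∀ y : W₀.{u}, a < y.1 → y.1 ≤ lam → y ∈ v := by
  obtain ⟨V, hV, rfl⟩ := isOpen_induced_iff.mp hv
  obtain ⟨a, ha, hIoo⟩ := (Ordinal.isOpen_iff.mp hV) lam hmem hlim
  refine ⟨a, ha, fun y hay hylam => ?_⟩
  rcases lt_or_eq_of_le hylam with h | h
  · exact hIoo ⟨hay, h⟩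
  · show y.1 ∈ V
    rw [h]; exact hmem

/-- The singleton of a successor ordinal point is open in `W`. -/
lemma isOpen_singleton_succ {a : Ordinal.{u}} (ha : a + 1 < ω_ 1) :
    IsOpen ({mkW (a + 1) ha} : Set W.{u}) := by
  have key : ({mkW (a + 1) ha} : Set W.{u}) = (fun x : W.{u} => x.1.1) ⁻¹' Set.Ioo a (a + 1 + 1) := by
    ext x
    simp only [Set.mem_singleton_iff, Set.mem_preimage, Set.mem_Ioo]
    constructor
    · rintro rfl
      have h1 : a < a + 1 := by rw [add_one_eq_succ]; exact Order.lt_succ a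
      have h2 : a + 1 < a + 1 + 1 := by rw [add_one_eq_succ (a + 1)]; exact Order.lt_succ (a + 1)
      exact ⟨h1, h2⟩
    · rintro ⟨h1, h2⟩
      have hle : x.1.1 ≤ a + 1 := by
        rw [add_one_eq_succ (a + 1)] at h2
        exact Order.lt_succ_iff.mp h2
      have hge : a + 1 ≤ x.1.1 := by
        rw [add_one_eq_succ]
        exact Order.succ_le_of_lt h1
      exact Subtype.ext (Subtype.ext (le_antisymm hle hge))
  rw [key]
  exact isOpen_Ioo.preimage (continuous_subtype_val.comp continuous_subtype_val)

/-- Pointwise modification of the inclusion `W → W₀` at one point. -/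
noncomputable def updFun (x₀ : W.{u}) (c : W₀.{u}) : W.{u} → W₀.{u} :=
  fun x => if x = x₀ then c else x.1

lemma continuous_updFun (x₀ : W.{u}) (c : W₀.{u}) (h : IsOpen ({x₀} : Set W.{u})) :
    Continuous (updFun x₀ c) := by
  rw [continuous_iff_continuousAt]
  intro y
  by_cases hy : y = x₀
  · subst hy
    refine ContinuousAt.congr (f := fun _ => c) continuousAt_const ?_
    filter_upwards [h.mem_nhds rfl] with z hz
    simp only [Set.mem_singleton_iff] at hz
    simp [updFun, hz]
  · refine ContinuousAt.congr (f := fun x : W.{u} => (x.1 : W₀.{u}))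
      (continuous_subtype_val.continuousAt) ?_
    have hopen : IsOpen ({x₀}ᶜ : Set W.{u}) := isOpen_compl_iff.mpr isClosed_singleton
    filter_upwards [hopen.mem_nhds hy] with z hz
    simp only [Set.mem_compl_iff, Set.mem_singleton_iff] at hz
    simp [updFun, hz]

noncomputable def updC (x₀ : W.{u}) (c : W₀.{u}) (h : IsOpen ({x₀} : Set W.{u})) :
    C(W.{u}, W₀.{u}) := ⟨updFun x₀ c, continuous_updFun x₀ c h⟩

@[simp] lemma updC_apply (x₀ : W.{u}) (c : W₀.{u}) (h : IsOpen ({x₀} : Set W.{u})) (x : W.{u}) :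
    updC x₀ c h x = if x = x₀ then c else x.1 := rfl

/-- Key combinatorial lemma: if an open `H ⊆ W × W₀` contains the diagonal, then there is
`a < ω₁` such that `H` contains the points `(a+1, lam)` for unboundedly many `lam < ω₁`. -/
lemma key_column {H : Set (W.{u} × W₀.{u})} (hH : IsOpen H)
    (hdiag : ∀ x : W.{u}, (x, (x.1 : W₀.{u})) ∈ H) :
    ∃ a, a < ω_ 1 ∧ ∀ β < ω_ 1, ∃ lam, β < lam ∧ lam < ω_ 1 ∧
      ∀ (x : W.{u}) (y : W₀.{u}), x.1.1 = a + 1 → y.1 = lam → (x, y) ∈ H := by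
  classical
  have hΩ : Order.IsSuccLimit (ω_ 1 : Ordinal.{u}) := Cardinal.isSuccLimit_omega 1
  have box : ∀ lam, ∀ _ : lam < ω_ 1, ∀ _ : Order.IsSuccLimit lam,
      ∃ d, d < lam ∧ ∀ (x : W.{u}) (y : W₀.{u}),
        d < x.1.1 → x.1.1 ≤ lam → d < y.1 → y.1 ≤ lam → (x, y) ∈ H := by
    intro lam hlt hlim
    have hmem : ((mkW lam hlt, mkW₀ lam hlt.le) : W.{u} × W₀.{u}) ∈ H := hdiag (mkW lam hlt)
    obtain ⟨u, v, hu, hv, hxu, hyv, huv⟩ :=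
      isOpen_prod_iff.mp hH (mkW lam hlt) (mkW₀ lam hlt.le) hmem
    obtain ⟨a1, ha1, hu'⟩ := exists_left_int hu hlt hlim hxu
    obtain ⟨a2, ha2, hv'⟩ := exists_left_int₀ hv hlt.le hlim hyv
    refine ⟨max a1 a2, max_lt ha1 ha2, fun x y hx1 hx2 hy1 hy2 => ?_⟩
    exact huv ⟨hu' x (lt_of_le_of_lt (le_max_left a1 a2) hx1) hx2,
      hv' y (lt_of_le_of_lt (le_max_right a1 a2) hy1) hy2⟩
  choose d hd hdP using box
  have main : ∃ a, a < ω_ 1 ∧ ∀ β < ω_ 1, ∃ lam, ∃ (h1 : lam < ω_ 1) (h2 : Order.IsSuccLimit lam),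
      β < lam ∧ a < lam ∧ d lam h1 h2 ≤ a := by
    by_contra hcon
    push_neg at hcon
    choose e he heP using hcon
    let X : ℕ → {o : Ordinal.{u} // o < ω_ 1} := fun n => Nat.rec
      ⟨0, hΩ.pos⟩
      (fun _ p => ⟨max (p.1 + 1) (e p.1 p.2 + 1),
        max_lt (by rw [add_one_eq_succ]; exact hΩ.succ_lt p.2)
          (by rw [add_one_eq_succ]; exact hΩ.succ_lt (he p.1 p.2))⟩) n
    have hXsucc : ∀ n, (X n).1 < (X (n + 1)).1 := fun n =>
      lt_of_lt_of_le (by rw [add_one_eq_succ]; exact Order.lt_succ _) (le_max_left _ _)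
    have hXe : ∀ n, e (X n).1 (X n).2 < (X (n + 1)).1 := fun n =>
      lt_of_lt_of_le (by rw [add_one_eq_succ]; exact Order.lt_succ _) (le_max_right _ _)
    have hlamlt : (⨆ n, (X n).1) < ω_ 1 := by
      exact Ordinal.iSup_lt_omega_one (fun n => (X n).2)
    set lam := ⨆ n, (X n).1 with hlamdef
    have hle : ∀ n, (X n).1 ≤ lam := fun n => Ordinal.le_iSup (fun n => (X n).1) n
    have hXlt : ∀ n, (X n).1 < lam := fun n => lt_of_lt_of_le (hXsucc n) (hle (n + 1))
    have hlim : Order.IsSuccLimit lam := by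
      rw [Ordinal.isSuccLimit_iff]
      refine ⟨?_, Order.isSuccPrelimit_of_succ_lt fun b hb => ?_⟩
      · intro h0
        have := hXlt 0
        rw [h0] at this
        exact zero_le.not_gt this
      · obtain ⟨n, hn⟩ := Ordinal.lt_iSup_iff.mp hb
        exact lt_of_le_of_lt (Order.succ_le_of_lt hn) (hXlt n)
    have hdlt : d lam hlamlt hlim < lam := hd lam hlamlt hlim
    obtain ⟨n, hn⟩ := Ordinal.lt_iSup_iff.mp hdlt
    have hcontra : (X n).1 < d lam hlamlt hlim :=
      heP (X n).1 (X n).2 lam hlamlt hlim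
        (lt_of_lt_of_le (hXe n) (hle (n + 1))) (hXlt n)
    exact absurd hn (not_lt_of_gt hcontra)
  obtain ⟨a, haΩ, hmain⟩ := main
  refine ⟨a, haΩ, fun β hβ => ?_⟩
  obtain ⟨lam, h1, h2, hβlam, halam, hdla⟩ := hmain β hβ
  refine ⟨lam, hβlam, h1, fun x y hx hy => ?_⟩
  have hsucc : a + 1 ≤ lam := by
    rw [add_one_eq_succ]; exact (h2.succ_lt halam).le
  refine hdP lam h1 h2 x y ?_ ?_ ?_ ?_
  · rw [hx]
    exact lt_of_le_of_lt hdla (by rw [add_one_eq_succ]; exact Order.lt_succ a)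
  · rw [hx]; exact hsucc
  · rw [hy]; exact hd lam h1 h2
  · rw [hy]

/-- The single-universe version of the main theorem. -/
lemma main_uni : ¬ @RegularSpace C(W.{u}, W₀.{u}) (graphTopology W.{u} W₀.{u}) := by
  intro hreg
  letI : TopologicalSpace C(W.{u}, W₀.{u}) := graphTopology W.{u} W₀.{u}
  haveI : RegularSpace C(W.{u}, W₀.{u}) := hreg
  have hΩ : Order.IsSuccLimit (ω_ 1 : Ordinal.{u}) := Cardinal.isSuccLimit_omega 1
  -- the inclusion map
  let f₀ : C(W.{u}, W₀.{u}) := ⟨fun x => x.1, continuous_subtype_val⟩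
  -- the separating basic open set: functions avoiding the top point
  let G : Set (W.{u} × W₀.{u}) := {p | p.2 ≠ wtop}
  have hGopen : IsOpen G := by
    have hG : G = Prod.snd ⁻¹' ({wtop}ᶜ : Set W₀.{u}) := rfl
    rw [hG]
    exact (isClosed_singleton.isOpen_compl).preimage continuous_snd
  have hf₀G : f₀ ∈ {f : C(W.{u}, W₀.{u}) | graphSet f ⊆ G} := by
    intro p hp
    have hp' : p.2 = p.1.1 := hp
    show p.2 ≠ wtop
    rw [hp']
    exact p.1.2
  have hFGnhds : {f : C(W.{u}, W₀.{u}) | graphSet f ⊆ G} ∈ nhds f₀ :=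
    (isOpen_FG hGopen).mem_nhds hf₀G
  obtain ⟨t, htmem, htclosed, htsub⟩ := exists_mem_nhds_isClosed_subset hFGnhds
  obtain ⟨O, hOsub, hOopen, hf₀O⟩ := mem_nhds_iff.mp htmem
  obtain ⟨H, hHopen, hgraphH, hFHsub⟩ := exists_basic hOopen f₀ hf₀O
  have hdiag : ∀ x : W.{u}, (x, (x.1 : W₀.{u})) ∈ H := fun x => hgraphH rfl
  obtain ⟨a, haΩ, hcol⟩ := key_column hHopen hdiag
  have hsuccΩ : a + 1 < ω_ 1 := by rw [add_one_eq_succ]; exact hΩ.succ_lt haΩ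
  let x₀ : W.{u} := mkW (a + 1) hsuccΩ
  have hx₀open : IsOpen ({x₀} : Set W.{u}) := isOpen_singleton_succ hsuccΩ
  let g : C(W.{u}, W₀.{u}) := updC x₀ wtop hx₀open
  -- g is in the closure of F_H
  have hgcl : g ∈ closure {f : C(W.{u}, W₀.{u}) | graphSet f ⊆ H} := by
    rw [mem_closure_iff]
    intro O' hO' hgO'
    obtain ⟨G', hG'open, hgraphG', hFG'sub⟩ := exists_basic hO' g hgO'
    have hx₀top : ((x₀, wtop) : W.{u} × W₀.{u}) ∈ G' := by
      refine hgraphG' ?_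
      show wtop = updC x₀ wtop hx₀open x₀
      simp
    obtain ⟨u, v, hu, hv, hx₀u, htopv, huv⟩ := isOpen_prod_iff.mp hG'open x₀ wtop hx₀top
    have htopv' : mkW₀ (ω_ 1) le_rfl ∈ v := htopv
    obtain ⟨β, hβΩ, hvint⟩ := exists_left_int₀ hv le_rfl hΩ htopv'
    obtain ⟨lam, hβlam, hlamΩ, hmemH⟩ := hcol β hβΩ
    let c : W₀.{u} := mkW₀ lam hlamΩ.le
    have hcv : c ∈ v := hvint c hβlam hlamΩ.le
    let h : C(W.{u}, W₀.{u}) := updC x₀ c hx₀open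
    refine ⟨h, hFG'sub ?_, ?_⟩
    · -- graphSet h ⊆ G'
      rintro ⟨p1, p2⟩ hp
      have hp2 : p2 = if p1 = x₀ then c else p1.1 := hp
      by_cases hpx : p1 = x₀
      · subst hpx
        rw [if_pos rfl] at hp2
        subst hp2
        exact huv ⟨hx₀u, hcv⟩
      · rw [if_neg hpx] at hp2
        refine hgraphG' ?_
        show p2 = updC x₀ wtop hx₀open p1
        rw [hp2]
        simp [hpx]
    · -- graphSet h ⊆ H
      rintro ⟨p1, p2⟩ hp
      have hp2 : p2 = if p1 = x₀ then c else p1.1 := hp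
      by_cases hpx : p1 = x₀
      · rw [if_pos hpx] at hp2
        refine hmemH p1 p2 ?_ ?_
        · rw [hpx]; rfl
        · rw [hp2]; rfl
      · rw [if_neg hpx] at hp2
        rw [hp2]
        exact hdiag p1
  -- hence g ∈ F_G, a contradiction
  have hgt : g ∈ {f : C(W.{u}, W₀.{u}) | graphSet f ⊆ G} := by
    have h1 : closure {f : C(W.{u}, W₀.{u}) | graphSet f ⊆ H} ⊆ closure t :=
      closure_mono (hFHsub.trans hOsub)
    have h2 : closure t = t := htclosed.closure_eq
    exact htsub (h2 ▸ h1 hgcl)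
  have hmem : ((x₀, wtop) : W.{u} × W₀.{u}) ∈ graphSet g := by
    show wtop = updC x₀ wtop hx₀open x₀
    simp
  exact (hgt hmem) rfl

/-! ### Transfer between universes -/

lemma lift_omega1_comm : Ordinal.lift.{v, u} (ω_ 1) = Ordinal.lift.{u, v} (ω_ 1) := by
  rw [← Cardinal.ord_aleph, ← Cardinal.ord_aleph, Cardinal.lift_ord, Cardinal.lift_ord,
    Cardinal.lift_aleph, Cardinal.lift_aleph, Ordinal.lift_one, Ordinal.lift_one]

lemma exists_down (o : Ordinal.{u}) (h : o ≤ ω_ 1) :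
    ∃ o' : Ordinal.{v}, Ordinal.lift.{u, v} o' = Ordinal.lift.{v, u} o ∧ o' ≤ ω_ 1 := by
  have h1 : Ordinal.lift.{v, u} o ≤ Ordinal.lift.{u, v} (ω_ 1) := by
    rw [← lift_omega1_comm]
    exact Ordinal.lift_le.mpr h
  obtain ⟨o', ho'⟩ := Ordinal.mem_range_lift_of_le h1
  refine ⟨o', ho', ?_⟩
  have : Ordinal.lift.{u, v} o' ≤ Ordinal.lift.{u, v} (ω_ 1) := by rw [ho']; exact h1
  exact Ordinal.lift_le.mp this

/-- Transfer map between the `W₀`s of different universes. -/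
noncomputable def tmap : W₀.{u} → W₀.{v} := fun x =>
  ⟨(exists_down x.1 (Set.mem_Iic.mp x.2)).choose,
    Set.mem_Iic.mpr (exists_down x.1 (Set.mem_Iic.mp x.2)).choose_spec.2⟩

lemma lift_tmap (x : W₀.{u}) :
    Ordinal.lift.{u, v} (tmap.{u, v} x).1 = Ordinal.lift.{v, u} x.1 :=
  (exists_down x.1 (Set.mem_Iic.mp x.2)).choose_spec.1

lemma tmap_tmap (x : W₀.{u}) : tmap.{v, u} (tmap.{u, v} x) = x := by
  have h1 := lift_tmap.{v, u} (tmap.{u, v} x)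
  have h2 := lift_tmap.{u, v} x
  rw [h2] at h1
  exact Subtype.ext (Ordinal.lift_inj.mp h1)

lemma tmap_le_tmap {x y : W₀.{u}} : tmap.{u, v} x ≤ tmap.{u, v} y ↔ x ≤ y := by
  constructor
  · intro h
    have h1 : Ordinal.lift.{u, v} (tmap.{u, v} x).1 ≤ Ordinal.lift.{u, v} (tmap.{u, v} y).1 :=
      Ordinal.lift_le.mpr (Subtype.coe_le_coe.mpr h)
    rw [lift_tmap, lift_tmap] at h1
    exact Subtype.coe_le_coe.mp (Ordinal.lift_le.mp h1)
  · intro h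
    have h1 : Ordinal.lift.{v, u} (x : Ordinal) ≤ Ordinal.lift.{v, u} (y : Ordinal) :=
      Ordinal.lift_le.mpr (Subtype.coe_le_coe.mpr h)
    rw [← lift_tmap.{u, v} x, ← lift_tmap.{u, v} y] at h1
    exact Subtype.coe_le_coe.mp (Ordinal.lift_le.mp h1)

/-- The order isomorphism between the `W₀`s of different universes. -/
noncomputable def tIso : W₀.{u} ≃o W₀.{v} where
  toFun := tmap.{u, v}
  invFun := tmap.{v, u}
  left_inv := tmap_tmap.{u, v}
  right_inv := tmap_tmap.{v, u}
  map_rel_iff' := tmap_le_tmap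

/-- Composition with a homeomorphism of targets is inducing for graph topologies. -/
lemma graphTopology_induced {X Y Y' : Type*} [TopologicalSpace X] [TopologicalSpace Y]
    [TopologicalSpace Y'] (e : Y ≃ₜ Y') :
    graphTopology X Y = TopologicalSpace.induced
      (fun g : C(X, Y) => ContinuousMap.comp ⟨e, e.continuous⟩ g) (graphTopology X Y') := by
  have key : ∀ (G : Set (X × Y')) (g : C(X, Y)),
      graphSet (ContinuousMap.comp ⟨⇑e, e.continuous⟩ g) ⊆ G ↔
        graphSet g ⊆ (Prod.map id ⇑e) ⁻¹' G := by
    intro G g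
    constructor
    · rintro hsub ⟨p1, p2⟩ hp
      have hp2 : p2 = g p1 := hp
      show (p1, e p2) ∈ G
      rw [hp2]
      exact hsub (show e (g p1) = (ContinuousMap.comp ⟨⇑e, e.continuous⟩ g) p1 from rfl)
    · rintro hsub ⟨q1, q2⟩ hq
      have hq2 : q2 = e (g q1) := hq
      have hmem : ((q1, g q1) : X × Y) ∈ (Prod.map id ⇑e) ⁻¹' G :=
        hsub (show g q1 = g q1 from rfl)
      have h2 : ((q1, e (g q1)) : X × Y') ∈ G := hmem
      rw [← hq2] at h2
      exact h2
  rw [graphTopology, graphTopology, induced_generateFrom_eq]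
  congr 1
  ext s
  simp only [Set.mem_image, Set.mem_setOf_eq]
  constructor
  · rintro ⟨G, hG, rfl⟩
    refine ⟨{f : C(X, Y') | graphSet f ⊆ (Prod.map id ⇑e.symm) ⁻¹' G},
      ⟨(Prod.map id ⇑e.symm) ⁻¹' G, hG.preimage (continuous_id.prodMap e.symm.continuous), rfl⟩, ?_⟩
    have hGG : (Prod.map id ⇑e) ⁻¹' ((Prod.map id ⇑e.symm) ⁻¹' G) = G := by
      ext ⟨p1, p2⟩
      show ((p1, e.symm (e p2)) : X × Y) ∈ G ↔ (p1, p2) ∈ G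
      rw [e.symm_apply_apply]
    ext g
    simp only [Set.mem_preimage, Set.mem_setOf_eq]
    rw [key, hGG]
  · rintro ⟨s1, ⟨G, hG, rfl⟩, rfl⟩
    refine ⟨(Prod.map id ⇑e) ⁻¹' G, hG.preimage (continuous_id.prodMap e.continuous), ?_⟩
    ext g
    simp only [Set.mem_preimage, Set.mem_setOf_eq]
    exact key G g

lemma transfer_reg (h : @RegularSpace C(W.{u}, W₀.{v}) (graphTopology W.{u} W₀.{v})) :
    @RegularSpace C(W.{u}, W₀.{u}) (graphTopology W.{u} W₀.{u}) := by
  letI : TopologicalSpace C(W.{u}, W₀.{v}) := graphTopology W.{u} W₀.{v}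
  letI : TopologicalSpace C(W.{u}, W₀.{u}) := graphTopology W.{u} W₀.{u}
  haveI : RegularSpace C(W.{u}, W₀.{v}) := h
  have e : W₀.{u} ≃ₜ W₀.{v} := tIso.{u, v}.toHomeomorph
  have hind : Topology.IsInducing
      (fun g : C(W.{u}, W₀.{u}) => ContinuousMap.comp ⟨e, e.continuous⟩ g) :=
    ⟨graphTopology_induced e⟩
  exact hind.regularSpace

end Aux

/-- `(C(W, W₀), τ_Γ)` is not a regular topological space. -/
theorem not_regularSpace_graphTopology_W : ¬ @RegularSpace C(W, W₀) (graphTopology W W₀) :=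
  fun hreg => main_uni (transfer_reg hreg)
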